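/- In the hypercube Q_n, for vertices u, v at distance h, the Hamming distance between their distance-k reachability indicator vectors is Ham(b_u^(k), b_v^(k)) = 2(C(n,k) − [h even and k ≥ h/2]·C(h, h/2)·C(n−h, k−h/2)). In particular, at k = 1, adjacent vertices (h = 1) have Ham = 2n and vertices with h = 2 have Ham = 2n − 4. -/

import Mathlib

open Finset
open scoped symmDiff

def hd {n : ℕ} (u v : Fin n → Bool) : ℕ := (univ.filter fun i => u i ≠ v i).card

def cubeRow {n : ℕ} (u : Fin n → Bool) (k : ℕ) : (Fin n → Bool) → ℕ :=
  fun w => if hd u w = k then 1 else 0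

def hamVec {n : ℕ} (x y : (Fin n → Bool) → ℕ) : ℕ :=
  (univ.filter fun w => x w ≠ y w).card

/-- Transfer counting over vertices to counting over subsets via `w ↦ {i | u i ≠ w i}`. -/
lemma count_transfer {n : ℕ} (u : Fin n → Bool) (P : Finset (Fin n) → Prop) [DecidablePred P] :
    (univ.filter fun w : Fin n → Bool => P (univ.filter fun i => u i ≠ w i)).card
      = (univ.filter fun S : Finset (Fin n) => P S).card := by
  apply card_nbij' (fun w => univ.filter fun i => u i ≠ w i)
    (fun S => fun i => if i ∈ S then !u i else u i)
  · intro w hw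
    simp only [mem_coe, mem_filter, mem_univ, true_and] at hw ⊢
    exact hw
  · intro S hS
    simp only [mem_coe, mem_filter, mem_univ, true_and] at hS ⊢
    convert hS using 2
    ext i
    simp only [mem_filter, mem_univ, true_and]
    by_cases hi : i ∈ S <;> simp [hi]
  · intro w _
    funext i
    simp only [mem_filter, mem_univ, true_and, ne_eq]
    by_cases h : u i = w i
    · simp [h]
    · simp only [h, if_neg, if_true, not_false_iff]
      revert h; cases u i <;> cases w i <;> simp
  · intro S _
    ext i
    simp only [mem_filter, mem_univ, true_and]
    by_cases hi : i ∈ S <;> simp [hi]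

lemma count_card_eq (n k : ℕ) :
    (univ.filter fun S : Finset (Fin n) => S.card = k).card = n.choose k := by
  have : (univ.filter fun S : Finset (Fin n) => S.card = k) = powersetCard k univ := by
    ext S
    simp [mem_powersetCard]
  rw [this, card_powersetCard, card_univ, Fintype.card_fin]

lemma split_eq {n : ℕ} {D P Q : Finset (Fin n)} (hP : P ⊆ D) (hQ : Q ⊆ Dᶜ) :
    (P ∪ Q) ∩ D = P ∧ (P ∪ Q) \ D = Q := by
  have hQ' : ∀ i ∈ Q, i ∉ D := fun i hi => by simpa using hQ hi
  constructor <;> (ext i; simp only [mem_inter, mem_union, mem_sdiff])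
  · exact ⟨fun ⟨h, hD⟩ => h.resolve_right (fun hq => hQ' i hq hD),
      fun h => ⟨Or.inl h, hP h⟩⟩
  · exact ⟨fun ⟨h, hD⟩ => h.resolve_left (fun hp => hD (hP hp)),
      fun h => ⟨Or.inr h, hQ' i h⟩⟩

lemma count_split {n : ℕ} (D : Finset (Fin n)) (a b : ℕ) :
    (univ.filter fun S : Finset (Fin n) => (S ∩ D).card = a ∧ (S \ D).card = b).card
      = D.card.choose a * (n - D.card).choose b := by
  have hc : Dᶜ.card = n - D.card := by
    rw [card_compl, Fintype.card_fin]
  rw [← hc, ← card_powersetCard a D, ← card_powersetCard b Dᶜ, ← card_product]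
  apply card_nbij' (fun S => (S ∩ D, S \ D)) (fun p => p.1 ∪ p.2)
  · intro S hS
    simp only [mem_coe, mem_filter, mem_univ, true_and] at hS
    simp only [mem_coe, mem_product, mem_powersetCard]
    exact ⟨⟨inter_subset_right, hS.1⟩, ⟨fun i hi => by simp [mem_sdiff.mp hi], hS.2⟩⟩
  · intro p hp
    simp only [mem_coe, mem_product, mem_powersetCard] at hp
    obtain ⟨⟨h1, h1c⟩, ⟨h2, h2c⟩⟩ := hp
    obtain ⟨e1, e2⟩ := split_eq h1 h2
    simp [mem_filter, e1, e2, h1c, h2c]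
  · intro S _
    ext i
    simp only [mem_union, mem_inter, mem_sdiff]
    tauto
  · intro p hp
    simp only [mem_coe, mem_product, mem_powersetCard] at hp
    obtain ⟨⟨h1, _⟩, ⟨h2, _⟩⟩ := hp
    obtain ⟨e1, e2⟩ := split_eq h1 h2
    exact Prod.ext e1 e2

lemma card_symmDiff' {α : Type*} [DecidableEq α] (S D : Finset α) :
    (S ∆ D).card = (S \ D).card + (D \ S).card := by
  rw [symmDiff_def]
  exact card_union_of_disjoint (disjoint_sdiff_sdiff)

lemma count_inter {n k h : ℕ} (D : Finset (Fin n)) (hD : D.card = h) :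
    (univ.filter fun S : Finset (Fin n) => S.card = k ∧ (S ∆ D).card = k).card
      = (if Even h ∧ h / 2 ≤ k then
          h.choose (h / 2) * (n - h).choose (k - h / 2) else 0) := by
  have key : ∀ S : Finset (Fin n),
      (S.card = k ∧ (S ∆ D).card = k) ↔
        (2 * (S ∩ D).card = h ∧ (S ∩ D).card + (S \ D).card = k) := by
    intro S
    have e1 : (S ∩ D).card + (S \ D).card = S.card := card_inter_add_card_sdiff S D
    have e2 : (D ∩ S).card + (D \ S).card = D.card := card_inter_add_card_sdiff D S
    have e3 : (S ∆ D).card = (S \ D).card + (D \ S).card := card_symmDiff' S D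
    rw [inter_comm] at e2
    omega
  split_ifs with hcond
  · obtain ⟨⟨m, hm⟩, hle⟩ := hcond
    have h2 : h / 2 = m := by omega
    have : (univ.filter fun S : Finset (Fin n) => S.card = k ∧ (S ∆ D).card = k)
        = univ.filter fun S : Finset (Fin n) =>
            (S ∩ D).card = h / 2 ∧ (S \ D).card = k - h / 2 := by
      apply filter_congr
      intro S _
      rw [key S]
      constructor <;> intro ⟨a1, a2⟩ <;> omega
    rw [this, count_split D (h / 2) (k - h / 2), hD]
  · have : (univ.filter fun S : Finset (Fin n) => S.card = k ∧ (S ∆ D).card = k) = ∅ := by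
      apply filter_eq_empty_iff.mpr
      intro S _
      rw [key S]
      rintro ⟨a1, a2⟩
      exact hcond ⟨⟨(S ∩ D).card, by omega⟩, by omega⟩
    rw [this, card_empty]

lemma hd_as_symmDiff {n : ℕ} (u v w : Fin n → Bool) :
    hd v w = (((univ.filter fun i => u i ≠ w i)) ∆ (univ.filter fun i => u i ≠ v i)).card := by
  unfold hd
  congr 1
  ext i
  simp only [mem_symmDiff, mem_filter, mem_univ, true_and]
  cases u i <;> cases v i <;> cases w i <;> simp

theorem stmt12 (n k : ℕ) (u v : Fin n → Bool) (h : ℕ) (hh : h = hd u v) :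
    hamVec (cubeRow u k) (cubeRow v k)
        = 2 * (Nat.choose n k -
            (if Even h ∧ h / 2 ≤ k then
              Nat.choose h (h / 2) * Nat.choose (n - h) (k - h / 2) else 0)) ∧
    (h = 1 → k = 1 → hamVec (cubeRow u k) (cubeRow v k) = 2 * n) ∧
    (h = 2 → k = 1 → hamVec (cubeRow u k) (cubeRow v k) = 2 * n - 4) := by
  set D : Finset (Fin n) := univ.filter fun i => u i ≠ v i with hDdef
  have hD : D.card = h := hh.symm
  have hhn : h ≤ n := by
    rw [hh]
    calc hd u v ≤ (univ : Finset (Fin n)).card := card_filter_le _ _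
    _ = n := by rw [card_univ, Fintype.card_fin]
  set A : Finset (Fin n → Bool) := univ.filter fun w => hd u w = k with hA
  set B : Finset (Fin n → Bool) := univ.filter fun w => hd v w = k with hB
  have hAc : A.card = n.choose k := by
    rw [hA]
    exact (count_transfer u fun S => S.card = k).trans (count_card_eq n k)
  have hBc : B.card = n.choose k := by
    rw [hB]
    exact (count_transfer v fun S => S.card = k).trans (count_card_eq n k)
  have hABc : (A ∩ B).card = (if Even h ∧ h / 2 ≤ k then
      h.choose (h / 2) * (n - h).choose (k - h / 2) else 0) := by
    have e : A ∩ B = univ.filter fun w : Fin n → Bool =>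
        ((univ.filter fun i => u i ≠ w i).card = k ∧
          ((univ.filter fun i => u i ≠ w i) ∆ D).card = k) := by
      ext w
      simp only [hA, hB, mem_inter, mem_filter, mem_univ, true_and]
      constructor
      · rintro ⟨h1, h2⟩
        exact ⟨h1, by rw [← hd_as_symmDiff u v w]; exact h2⟩
      · rintro ⟨h1, h2⟩
        exact ⟨h1, by rw [hd_as_symmDiff u v w]; exact h2⟩
    rw [e, count_transfer u (fun S : Finset (Fin n) => S.card = k ∧ (S ∆ D).card = k),
      count_inter D hD]
  have hIle : (A ∩ B).card ≤ n.choose k := by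
    rw [← hAc]; exact card_le_card inter_subset_left
  have hmain : hamVec (cubeRow u k) (cubeRow v k) = (A ∆ B).card := by
    unfold hamVec
    congr 1
    ext w
    rw [mem_filter]
    simp only [mem_symmDiff, hA, hB, mem_filter, mem_univ, true_and, cubeRow]
    by_cases h1 : hd u w = k <;> by_cases h2 : hd v w = k <;> simp [h1, h2]
  have hsd : (A ∆ B).card = A.card + B.card - 2 * (A ∩ B).card := by
    have e1 : (A ∩ B).card + (A \ B).card = A.card := card_inter_add_card_sdiff A B
    have e2 : (B ∩ A).card + (B \ A).card = B.card := card_inter_add_card_sdiff B A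
    rw [inter_comm] at e2
    rw [card_symmDiff' A B]
    omega
  have key : hamVec (cubeRow u k) (cubeRow v k)
      = 2 * (Nat.choose n k - (if Even h ∧ h / 2 ≤ k then
          Nat.choose h (h / 2) * Nat.choose (n - h) (k - h / 2) else 0)) := by
    rw [hmain, hsd, hAc, hBc, ← hABc]
    omega
  refine ⟨key, ?_, ?_⟩
  · intro h1 k1
    subst h1; subst k1
    rw [key, if_neg (by decide), Nat.choose_one_right]
    omega
  · intro h2 k1
    subst h2; subst k1
    rw [key, if_pos (by decide)]
    have e1 : Nat.choose 2 (2 / 2) = 2 := by decide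
    have e2 : Nat.choose (n - 2) (1 - 2 / 2) = 1 := by
      norm_num
    rw [Nat.choose_one_right, e1, e2]
    omega
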